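/- arXiv:1607.00473 — 2 statements merged into one kernel-verified Lean document; each statement's English description precedes it below -/
import Mathlib

section
/- Let a, b ≥ 1 be integers and n = a + b. The multiset of eigenvalues of the distance signless Laplacian 𝒬(K_{a,b}) of the complete bipartite graph K_{a,b} consists of 2n−a−4 with multiplicity b−1, 2n−b−4 with multiplicity a−1, together with the two eigenvalues (5n−8+√(9n²−32ab))/2 and (5n−8−√(9n²−32ab))/2. -/
open Finset Matrix

noncomputable def distMatrix {V : Type*} [Fintype V] (G : SimpleGraph V) : Matrix V V ℝ :=
  Matrix.of fun u v => (G.dist u v : ℝ)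

theorem distMatrix_isHermitian {V : Type*} [Fintype V] (G : SimpleGraph V) :
    (distMatrix G).IsHermitian := by
  show (distMatrix G)ᴴ = distMatrix G
  ext i j
  simp [distMatrix, Matrix.conjTranspose_apply, SimpleGraph.dist_comm]

noncomputable def transmission {V : Type*} [Fintype V] (G : SimpleGraph V) (v : V) : ℝ :=
  ∑ u, (G.dist v u : ℝ)

noncomputable def distSLMatrix {V : Type*} [Fintype V] [DecidableEq V] (G : SimpleGraph V) :
    Matrix V V ℝ :=
  Matrix.diagonal (transmission G) + distMatrix G

theorem distSLMatrix_isHermitian {V : Type*} [Fintype V] [DecidableEq V] (G : SimpleGraph V) :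
    (distSLMatrix G).IsHermitian :=
  (Matrix.isHermitian_diagonal _).add (distMatrix_isHermitian G)

noncomputable def maxEig {V : Type*} [Fintype V] [DecidableEq V] {A : Matrix V V ℝ}
    (hA : A.IsHermitian) : ℝ :=
  ⨆ i, hA.eigenvalues i

noncomputable def minEig {V : Type*} [Fintype V] [DecidableEq V] {A : Matrix V V ℝ}
    (hA : A.IsHermitian) : ℝ :=
  ⨅ i, hA.eigenvalues i

noncomputable def distSpread {V : Type*} [Fintype V] [DecidableEq V] (G : SimpleGraph V) : ℝ :=
  maxEig (distMatrix_isHermitian G) - minEig (distMatrix_isHermitian G)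

noncomputable def distSLSpread {V : Type*} [Fintype V] [DecidableEq V] (G : SimpleGraph V) : ℝ :=
  maxEig (distSLMatrix_isHermitian G) - minEig (distSLMatrix_isHermitian G)


section Dist
variable {a b : ℕ}

lemma cb_adj (u v : Fin a ⊕ Fin b) :
    (completeBipartiteGraph (Fin a) (Fin b)).Adj u v ↔
      (u.isLeft ∧ v.isRight ∨ u.isRight ∧ v.isLeft) := Iff.rfl

lemma cb_dist_lr (i : Fin a) (j : Fin b) :
    (completeBipartiteGraph (Fin a) (Fin b)).dist (Sum.inl i) (Sum.inr j) = 1 := by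
  rw [SimpleGraph.dist_eq_one_iff_adj]; simp

lemma cb_dist_rl (j : Fin b) (i : Fin a) :
    (completeBipartiteGraph (Fin a) (Fin b)).dist (Sum.inr j) (Sum.inl i) = 1 := by
  rw [SimpleGraph.dist_eq_one_iff_adj]; simp

lemma cb_dist_ll (hb : 1 ≤ b) {i j : Fin a} (hij : i ≠ j) :
    (completeBipartiteGraph (Fin a) (Fin b)).dist (Sum.inl i) (Sum.inl j) = 2 := by
  set G := completeBipartiteGraph (Fin a) (Fin b)
  have hadj1 : G.Adj (Sum.inl i) (Sum.inr ⟨0, hb⟩) := by simp [G]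
  have hadj2 : G.Adj (Sum.inr (⟨0, hb⟩ : Fin b)) (Sum.inl j) := by simp [G]
  have hle : G.dist (Sum.inl i) (Sum.inl j) ≤ 2 := by
    have := SimpleGraph.dist_le (hadj1.toWalk.append hadj2.toWalk)
    simpa using this
  have hne : G.dist (Sum.inl i) (Sum.inl j) ≠ 0 := by
    have hr : G.Reachable (Sum.inl i) (Sum.inl j) :=
      ⟨hadj1.toWalk.append hadj2.toWalk⟩
    have := hr.pos_dist_of_ne (by simpa using hij)
    omega
  have hne1 : G.dist (Sum.inl i) (Sum.inl j) ≠ 1 := by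
    rw [ne_eq, SimpleGraph.dist_eq_one_iff_adj]; simp [G]
  omega

lemma cb_dist_rr (ha : 1 ≤ a) {i j : Fin b} (hij : i ≠ j) :
    (completeBipartiteGraph (Fin a) (Fin b)).dist (Sum.inr i) (Sum.inr j) = 2 := by
  set G := completeBipartiteGraph (Fin a) (Fin b)
  have hadj1 : G.Adj (Sum.inr i) (Sum.inl ⟨0, ha⟩) := by simp [G]
  have hadj2 : G.Adj (Sum.inl (⟨0, ha⟩ : Fin a)) (Sum.inr j) := by simp [G]
  have hle : G.dist (Sum.inr i) (Sum.inr j) ≤ 2 := by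
    have := SimpleGraph.dist_le (hadj1.toWalk.append hadj2.toWalk)
    simpa using this
  have hne : G.dist (Sum.inr i) (Sum.inr j) ≠ 0 := by
    have hr : G.Reachable (Sum.inr i) (Sum.inr j) :=
      ⟨hadj1.toWalk.append hadj2.toWalk⟩
    have := hr.pos_dist_of_ne (by simpa using hij)
    omega
  have hne1 : G.dist (Sum.inr i) (Sum.inr j) ≠ 1 := by
    rw [ne_eq, SimpleGraph.dist_eq_one_iff_adj]; simp [G]
  omega

end Dist

section Trans
variable {a b : ℕ}

lemma cb_trans_l (ha : 1 ≤ a) (hb : 1 ≤ b) (i : Fin a) :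
    transmission (completeBipartiteGraph (Fin a) (Fin b)) (Sum.inl i) = 2*a + b - 2 := by
  set G := completeBipartiteGraph (Fin a) (Fin b)
  rw [transmission, Fintype.sum_sum_type]
  have h1 : ∀ j : Fin a, ((G.dist (Sum.inl i) (Sum.inl j) : ℝ)) =
      (if j = i then 0 else 2) := by
    intro j
    by_cases h : j = i
    · simp [h]
    · rw [cb_dist_ll hb (fun hh => h hh.symm)]; simp [h]
  have h2 : ∀ j : Fin b, ((G.dist (Sum.inl i) (Sum.inr j) : ℝ)) = 1 := by
    intro j; rw [cb_dist_lr]; norm_num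
  rw [Finset.sum_congr rfl (fun j _ => h1 j), Finset.sum_congr rfl (fun j _ => h2 j)]
  have : ∀ j : Fin a, (if j = i then (0:ℝ) else 2) = 2 - (if j = i then 2 else 0) := by
    intro j; by_cases h : j = i <;> simp [h]
  rw [Finset.sum_congr rfl (fun j _ => this j), Finset.sum_sub_distrib,
    Finset.sum_ite_eq' Finset.univ i (fun _ => (2:ℝ)) ]
  simp
  ring

lemma cb_trans_r (ha : 1 ≤ a) (hb : 1 ≤ b) (i : Fin b) :
    transmission (completeBipartiteGraph (Fin a) (Fin b)) (Sum.inr i) = a + 2*b - 2 := by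
  set G := completeBipartiteGraph (Fin a) (Fin b)
  rw [transmission, Fintype.sum_sum_type]
  have h1 : ∀ j : Fin b, ((G.dist (Sum.inr i) (Sum.inr j) : ℝ)) =
      (if j = i then 0 else 2) := by
    intro j
    by_cases h : j = i
    · simp [h]
    · rw [cb_dist_rr ha (fun hh => h hh.symm)]; simp [h]
  have h2 : ∀ j : Fin a, ((G.dist (Sum.inr i) (Sum.inl j) : ℝ)) = 1 := by
    intro j; rw [cb_dist_rl]; norm_num
  rw [Finset.sum_congr rfl (fun j _ => h1 j), Finset.sum_congr rfl (fun j _ => h2 j)]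
  have : ∀ j : Fin b, (if j = i then (0:ℝ) else 2) = 2 - (if j = i then 2 else 0) := by
    intro j; by_cases h : j = i <;> simp [h]
  rw [Finset.sum_congr rfl (fun j _ => this j), Finset.sum_sub_distrib,
    Finset.sum_ite_eq' Finset.univ i (fun _ => (2:ℝ)) ]
  simp
  ring

end Trans

section Struct
variable (a b : ℕ)

noncomputable def Uu : Matrix (Fin a ⊕ Fin b) (Fin 2) ℝ :=
  Matrix.of fun v k =>
    Sum.elim (fun _ => if k = 0 then (1:ℝ) else 0) (fun _ => if k = 1 then 1 else 0) v

def Wm : Matrix (Fin 2) (Fin 2) ℝ := !![2, 1; 1, 2]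

noncomputable def cc : Fin a ⊕ Fin b → ℝ :=
  Sum.elim (fun _ => 2*a + b - 4) (fun _ => a + 2*b - 4)

lemma Q_eq (ha : 1 ≤ a) (hb : 1 ≤ b) :
    distSLMatrix (completeBipartiteGraph (Fin a) (Fin b)) =
      Matrix.diagonal (cc a b) + Uu a b * Wm * (Uu a b)ᵀ := by
  ext u v
  have hW : (Uu a b * Wm * (Uu a b)ᵀ) u v =
      ∑ k : Fin 2, ∑ l : Fin 2, Uu a b u k * Wm k l * Uu a b v l := by
    simp [Matrix.mul_apply, Finset.sum_mul, Finset.mul_sum, Fin.sum_univ_two]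
    ring
  rw [distSLMatrix, Matrix.add_apply, Matrix.add_apply, hW]
  rcases u with i | i <;> rcases v with j | j
  · by_cases h : i = j
    · subst h
      simp [Matrix.diagonal_apply_eq, cb_trans_l ha hb, cc, SimpleGraph.dist_self, distMatrix, Uu, Wm,
        Fin.sum_univ_two]
      ring
    · rw [Matrix.diagonal_apply_ne _ (by simp [h]), Matrix.diagonal_apply_ne _ (by simp [h])]
      simp [distMatrix, cb_dist_ll hb h, cc, Uu, Wm, Fin.sum_univ_two]
  · rw [Matrix.diagonal_apply_ne _ (by simp), Matrix.diagonal_apply_ne _ (by simp)]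
    simp [distMatrix, cb_dist_lr, Uu, Wm, Fin.sum_univ_two]
  · rw [Matrix.diagonal_apply_ne _ (by simp), Matrix.diagonal_apply_ne _ (by simp)]
    simp [distMatrix, cb_dist_rl, Uu, Wm, Fin.sum_univ_two]
  · by_cases h : i = j
    · subst h
      simp [Matrix.diagonal_apply_eq, cb_trans_r ha hb, cc, SimpleGraph.dist_self, distMatrix, Uu, Wm,
        Fin.sum_univ_two]
      ring
    · rw [Matrix.diagonal_apply_ne _ (by simp [h]), Matrix.diagonal_apply_ne _ (by simp [h])]
      simp [distMatrix, cb_dist_rr ha h, cc, Uu, Wm, Fin.sum_univ_two]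

end Struct

section Det
variable (a b : ℕ)

lemma det_tQ (ha : 1 ≤ a) (hb : 1 ≤ b) (t : ℝ)
    (hx : t - (2*a+b-4) ≠ 0) (hy : t - (a+2*b-4) ≠ 0) :
    Matrix.det (t • (1 : Matrix (Fin a ⊕ Fin b) (Fin a ⊕ Fin b) ℝ)
        - distSLMatrix (completeBipartiteGraph (Fin a) (Fin b))) =
      (t - (2*a+b-4))^(a-1) * (t - (a+2*b-4))^(b-1) *
        ((t - (2*a+b-4) - 2*a) * (t - (a+2*b-4) - 2*b) - a*b) := by
  set x : ℝ := t - (2*a+b-4) with hxd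
  set y : ℝ := t - (a+2*b-4) with hyd
  have hcc : ∀ v, t - cc a b v ≠ 0 := by
    intro v; rcases v with i | i
    · simpa [cc] using hx
    · simpa [cc] using hy
  set Dt : Matrix (Fin a ⊕ Fin b) (Fin a ⊕ Fin b) ℝ := Matrix.diagonal (fun v => t - cc a b v)
    with hDt
  set Dinv : Matrix (Fin a ⊕ Fin b) (Fin a ⊕ Fin b) ℝ :=
    Matrix.diagonal (fun v => (t - cc a b v)⁻¹) with hDinv
  have hDD : Dt * Dinv = 1 := by
    rw [hDt, hDinv, Matrix.diagonal_mul_diagonal]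
    have hfun : (fun v => (t - cc a b v) * (t - cc a b v)⁻¹) = fun _ => (1:ℝ) :=
      funext fun v => mul_inv_cancel₀ (hcc v)
    rw [hfun, Matrix.diagonal_one]
  have hsplit : t • (1 : Matrix (Fin a ⊕ Fin b) (Fin a ⊕ Fin b) ℝ)
      - distSLMatrix (completeBipartiteGraph (Fin a) (Fin b))
      = Dt * (1 - (Dinv * (Uu a b * Wm)) * (Uu a b)ᵀ) := by
    rw [Matrix.mul_sub, Matrix.mul_one, ← Matrix.mul_assoc, ← Matrix.mul_assoc, hDD, Matrix.one_mul]
    rw [Q_eq a b ha hb, hDt]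
    rw [Matrix.smul_one_eq_diagonal]
    rw [← Matrix.diagonal_sub]
    abel
  rw [hsplit, Matrix.det_mul, Matrix.det_one_sub_mul_comm]
  have hdDt : Dt.det = x^a * y^b := by
    rw [hDt, Matrix.det_diagonal, Fintype.prod_sum_type]
    simp [cc, hxd, hyd]
  have hN : (1 - (Uu a b)ᵀ * (Dinv * (Uu a b * Wm))).det =
      (1 - 2*a/x) * (1 - 2*b/y) - (a/x) * (b/y) := by
    rw [Matrix.det_fin_two]
    simp [Matrix.mul_apply, Fintype.sum_sum_type, Uu, Wm, cc, Fin.sum_univ_two,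
      Matrix.one_apply, hDinv, Matrix.diagonal_apply, hxd, hyd]
    field_simp
  rw [hdDt, hN]
  have hxa : x^a = x^(a-1) * x := by
    conv_lhs => rw [show a = (a-1)+1 by omega]
    rw [pow_succ]
  have hyb : y^b = y^(b-1) * y := by
    conv_lhs => rw [show b = (b-1)+1 by omega]
    rw [pow_succ]
  rw [hxa, hyb]
  field_simp

end Det

section Spec

lemma det_smul_one_sub_eq_prod {V : Type*} [Fintype V] [DecidableEq V]
    (A : Matrix V V ℝ) (hA : A.IsHermitian) (t : ℝ) :
    Matrix.det (t • (1 : Matrix V V ℝ) - A) = ∏ i, (t - hA.eigenvalues i) := by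
  set U : Matrix V V ℝ := (Matrix.IsHermitian.eigenvectorUnitary hA : Matrix V V ℝ) with hU
  have hUU : U * star U = 1 :=
    Matrix.mem_unitaryGroup_iff.mp (Matrix.IsHermitian.eigenvectorUnitary hA).2
  have hUU' : star U * U = 1 :=
    Matrix.mem_unitaryGroup_iff'.mp (Matrix.IsHermitian.eigenvectorUnitary hA).2
  have hspec : A = U * Matrix.diagonal (RCLike.ofReal ∘ hA.eigenvalues) * star U :=
    hA.spectral_theorem
  have hone : t • (1 : Matrix V V ℝ) =
      U * (t • (1 : Matrix V V ℝ)) * star U := by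
    rw [Matrix.mul_smul, Matrix.smul_mul, Matrix.mul_one, hUU]
  have key : t • (1 : Matrix V V ℝ) - A =
      U * (t • (1 : Matrix V V ℝ) - Matrix.diagonal (RCLike.ofReal ∘ hA.eigenvalues)) * star U := by
    rw [Matrix.mul_sub, Matrix.sub_mul, ← hone, ← hspec]
  rw [key, Matrix.det_mul, Matrix.det_mul, mul_comm, ← mul_assoc, ← Matrix.det_mul, hUU']
  rw [Matrix.det_one, one_mul]
  rw [Matrix.smul_one_eq_diagonal, Matrix.diagonal_sub, Matrix.det_diagonal]
  simp

end Spec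

theorem stmt9 (a b : ℕ) (ha : 1 ≤ a) (hb : 1 ≤ b) (n : ℕ) (hn : n = a + b) :
    Multiset.map (distSLMatrix_isHermitian (completeBipartiteGraph (Fin a) (Fin b))).eigenvalues
        Finset.univ.val =
      Multiset.replicate (b - 1) (2*(n : ℝ) - a - 4) +
      Multiset.replicate (a - 1) (2*(n : ℝ) - b - 4) +
        {(5*(n : ℝ) - 8 + Real.sqrt (9*(n : ℝ)^2 - 32*a*b)) / 2,
         (5*(n : ℝ) - 8 - Real.sqrt (9*(n : ℝ)^2 - 32*a*b)) / 2} := by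
  have hnr : (n : ℝ) = a + b := by rw [hn]; push_cast; ring
  set hQ := distSLMatrix_isHermitian (completeBipartiteGraph (Fin a) (Fin b)) with hhQ
  set s : Multiset ℝ := Multiset.map hQ.eigenvalues Finset.univ.val with hs
  set lam1 : ℝ := (5*(n : ℝ) - 8 + Real.sqrt (9*(n : ℝ)^2 - 32*a*b)) / 2 with hl1
  set lam2 : ℝ := (5*(n : ℝ) - 8 - Real.sqrt (9*(n : ℝ)^2 - 32*a*b)) / 2 with hl2
  set u : Multiset ℝ := Multiset.replicate (b - 1) (2*(n : ℝ) - a - 4) +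
      Multiset.replicate (a - 1) (2*(n : ℝ) - b - 4) + {lam1, lam2} with hu
  have hsqrt : Real.sqrt (9*(n : ℝ)^2 - 32*a*b) * Real.sqrt (9*(n : ℝ)^2 - 32*a*b)
      = 9*(n : ℝ)^2 - 32*a*b := by
    apply Real.mul_self_sqrt
    rw [hnr]; nlinarith [sq_nonneg ((a:ℝ) - b), sq_nonneg ((a:ℝ)*b)]
  suffices hpoly : (Multiset.map (fun c => Polynomial.X - Polynomial.C c) s).prod =
      (Multiset.map (fun c => Polynomial.X - Polynomial.C c) u).prod by
    have := congrArg Polynomial.roots hpoly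
    rwa [Polynomial.roots_multiset_prod_X_sub_C, Polynomial.roots_multiset_prod_X_sub_C] at this
  apply Polynomial.eq_of_infinite_eval_eq
  have hsub : ({(2*(a:ℝ)+b-4), ((a:ℝ)+2*b-4)} : Set ℝ)ᶜ ⊆
      { t : ℝ | Polynomial.eval t (Multiset.map (fun c => Polynomial.X - Polynomial.C c) s).prod =
        Polynomial.eval t (Multiset.map (fun c => Polynomial.X - Polynomial.C c) u).prod } := by
    intro t ht
    simp only [Set.mem_compl_iff, Set.mem_insert_iff, Set.mem_singleton_iff, not_or] at ht
    obtain ⟨ht1, ht2⟩ := ht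
    have hx : t - (2*(a:ℝ)+b-4) ≠ 0 := sub_ne_zero.mpr ht1
    have hy : t - ((a:ℝ)+2*b-4) ≠ 0 := sub_ne_zero.mpr ht2
    simp only [Set.mem_setOf_eq]
    have heval : ∀ m : Multiset ℝ,
        Polynomial.eval t (Multiset.map (fun c => Polynomial.X - Polynomial.C c) m).prod =
          (Multiset.map (fun c => t - c) m).prod := by
      intro m
      rw [Polynomial.eval_multiset_prod, Multiset.map_map]
      simp [Function.comp]
    rw [heval, heval]
    have hL : (Multiset.map (fun c => t - c) s).prod = ∏ i, (t - hQ.eigenvalues i) := by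
      rw [hs, Multiset.map_map]
      rfl
    have hR : (Multiset.map (fun c => t - c) u).prod =
        (t - (2*(n:ℝ) - a - 4))^(b-1) * (t - (2*(n:ℝ) - b - 4))^(a-1)
          * ((t - lam1) * (t - lam2)) := by
      rw [hu]
      simp only [Multiset.map_add, Multiset.prod_add, Multiset.map_replicate,
        Multiset.prod_replicate, Multiset.insert_eq_cons, Multiset.map_cons,
        Multiset.map_singleton, Multiset.prod_cons, Multiset.prod_singleton]
    rw [hL, hR]
    rw [← det_smul_one_sub_eq_prod _ hQ t, det_tQ a b ha hb t hx hy]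
    have e1 : 2*(n:ℝ) - a - 4 = (a:ℝ)+2*b-4 := by rw [hnr]; ring
    have e2 : 2*(n:ℝ) - b - 4 = 2*(a:ℝ)+b-4 := by rw [hnr]; ring
    rw [e1, e2]
    have e3 : (t - (2*(a:ℝ)+b-4) - 2*a) * (t - ((a:ℝ)+2*b-4) - 2*b) - a*b
        = (t - lam1) * (t - lam2) := by
      rw [hnr] at hsqrt
      rw [hl1, hl2, hnr]
      field_simp
      rw [show (9*((a:ℝ)+b)^2 - 32*a*b) = ((a:ℝ)+b)^2*9 - a*b*32 by ring] at hsqrt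
      linear_combination hsqrt
    rw [e3]
    ring
  apply Set.Infinite.mono hsub
  apply Set.Finite.infinite_compl
  exact (Set.finite_singleton _).insert _
end

section
/- Let n ≥ 4 and a be integers with 2 ≤ a ≤ n/2. Then the least eigenvalue of the distance signless Laplacian of the complete bipartite graph K_{a,n−a} is q^𝒟_min(K_{a,n−a}) = n + a − 4. -/
open Finset Matrix

lemma eig_ge_of_quadform {m : Type*} [Fintype m] [DecidableEq m] {A : Matrix m m ℝ}
    (hA : A.IsHermitian) {c : ℝ}
    (h : ∀ x : m → ℝ, c * (x ⬝ᵥ x) ≤ x ⬝ᵥ (A *ᵥ x)) (i : m) : c ≤ hA.eigenvalues i := by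
  have hv := hA.eigenvalues_eq i
  set v : m → ℝ := ⇑(hA.eigenvectorBasis i) with hvdef
  have hnorm1 : ‖hA.eigenvectorBasis i‖ = 1 := hA.eigenvectorBasis.orthonormal.1 i
  have hinner : v ⬝ᵥ v = 1 := by
    have := real_inner_self_eq_norm_sq (hA.eigenvectorBasis i)
    rw [hnorm1] at this
    rw [one_pow] at this; rw [← this, PiLp.inner_apply]; simp [dotProduct, hvdef, mul_comm, pow_two]
  have := h v
  rw [hinner, mul_one] at this
  calc c ≤ v ⬝ᵥ (A *ᵥ v) := this
    _ = hA.eigenvalues i := by rw [hv]; simp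

lemma exists_eigenvalue_eq {m : Type*} [Fintype m] [DecidableEq m] {A : Matrix m m ℝ}
    (hA : A.IsHermitian) {c : ℝ} {w : m → ℝ} (hw : w ≠ 0) (hAw : A *ᵥ w = c • w) :
    ∃ i, hA.eigenvalues i = c := by
  have hdet : (A - c • 1).det = 0 := by
    rw [← Matrix.exists_mulVec_eq_zero_iff]
    exact ⟨w, hw, by simp [Matrix.sub_mulVec, hAw, Matrix.smul_mulVec]⟩
  set U : Matrix m m ℝ := (hA.eigenvectorUnitary : Matrix m m ℝ) with hUdef
  have hU : U * star U = 1 := mem_unitaryGroup_iff.mp hA.eigenvectorUnitary.2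
  have hsplit : A - c • 1 = U * (Matrix.diagonal (fun i => hA.eigenvalues i - c)) * star U := by
    have h1 : (Matrix.diagonal (fun i => hA.eigenvalues i - c))
        = Matrix.diagonal (RCLike.ofReal ∘ hA.eigenvalues) - c • (1 : Matrix m m ℝ) := by
      ext i j
      by_cases h : i = j <;> simp [Matrix.diagonal, Matrix.one_apply, h]
    rw [h1, Matrix.mul_sub, Matrix.sub_mul]
    have h2 : U * (c • (1 : Matrix m m ℝ)) * star U = c • (1 : Matrix m m ℝ) := by
      rw [Matrix.mul_smul, Matrix.mul_one, Matrix.smul_mul, hU]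
    rw [h2]; exact congrArg (· - c • (1 : Matrix m m ℝ)) hA.spectral_theorem
  rw [hsplit] at hdet
  have hdetU : U.det * (star U).det = 1 := by
    rw [← Matrix.det_mul, hU, Matrix.det_one]
  rw [Matrix.det_mul, Matrix.det_mul, Matrix.det_diagonal] at hdet
  have : ∏ i, (hA.eigenvalues i - c) = 0 := by
    rcases mul_eq_zero.mp hdet with h | h
    · rcases mul_eq_zero.mp h with h' | h'
      · rw [h', zero_mul] at hdetU; exact absurd hdetU zero_ne_one
      · exact h'
    · rw [h, mul_zero] at hdetU; exact absurd hdetU zero_ne_one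
  obtain ⟨i, _, hi⟩ := Finset.prod_eq_zero_iff.mp this
  exact ⟨i, by linarith [sub_eq_zero.mp hi]⟩

theorem stmt11 (n a : ℕ) (hn : 4 ≤ n) (ha1 : 2 ≤ a) (ha2 : 2*a ≤ n) :
    minEig (distSLMatrix_isHermitian (completeBipartiteGraph (Fin a) (Fin (n - a)))) =
      (n : ℝ) + a - 4 := by
  set b := n - a with hbdef
  have hab : a + b = n := by omega
  have hba : a ≤ b := by omega
  have ha0 : 0 < a := by omega
  have hb0 : 0 < b := by omega
  set G := completeBipartiteGraph (Fin a) (Fin b) with hGdef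
  -- distance lemmas
  have d_lr : ∀ (i : Fin a) (j : Fin b), G.dist (Sum.inl i) (Sum.inr j) = 1 := by
    intro i j
    exact SimpleGraph.dist_eq_one_iff_adj.mpr (by simp [hGdef])
  have d_rl : ∀ (j : Fin b) (i : Fin a), G.dist (Sum.inr j) (Sum.inl i) = 1 := by
    intro j i
    exact SimpleGraph.dist_eq_one_iff_adj.mpr (by simp [hGdef])
  have d_ll : ∀ (i i' : Fin a), i ≠ i' → G.dist (Sum.inl i) (Sum.inl i') = 2 := by
    intro i i' h
    set w : G.Walk (Sum.inl i) (Sum.inl i') :=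
      .cons (by simp [hGdef]) (.cons (show G.Adj (Sum.inr ⟨0, hb0⟩) (Sum.inl i') by simp [hGdef]) .nil) with hw
    have h2 : G.dist (Sum.inl i) (Sum.inl i') ≤ 2 := by
      have := SimpleGraph.dist_le w
      simpa [SimpleGraph.Walk.length_cons, hw] using this
    have h1 : G.dist (Sum.inl i) (Sum.inl i') ≠ 1 := by
      rw [Ne, SimpleGraph.dist_eq_one_iff_adj]; simp [hGdef]
    have h0 : G.dist (Sum.inl i) (Sum.inl i') ≠ 0 := by
      rw [Ne, w.reachable.dist_eq_zero_iff]; simp [h]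
    omega
  have d_rr : ∀ (j j' : Fin b), j ≠ j' → G.dist (Sum.inr j) (Sum.inr j') = 2 := by
    intro j j' h
    set w : G.Walk (Sum.inr j) (Sum.inr j') :=
      .cons (by simp [hGdef]) (.cons (show G.Adj (Sum.inl ⟨0, ha0⟩) (Sum.inr j') by simp [hGdef]) .nil) with hw
    have h2 : G.dist (Sum.inr j) (Sum.inr j') ≤ 2 := by
      have := SimpleGraph.dist_le w
      simpa [SimpleGraph.Walk.length_cons, hw] using this
    have h1 : G.dist (Sum.inr j) (Sum.inr j') ≠ 1 := by
      rw [Ne, SimpleGraph.dist_eq_one_iff_adj]; simp [hGdef]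
    have h0 : G.dist (Sum.inr j) (Sum.inr j') ≠ 0 := by
      rw [Ne, w.reachable.dist_eq_zero_iff]; simp [h]
    omega
  have dcast_ll : ∀ (i i' : Fin a),
      ((G.dist (Sum.inl i) (Sum.inl i') : ℝ)) = 2 - (if i' = i then 2 else 0) := by
    intro i i'
    by_cases h : i' = i
    · subst h; simp
    · rw [d_ll i i' (Ne.symm h)]; simp [h]
  have dcast_rr : ∀ (j j' : Fin b),
      ((G.dist (Sum.inr j) (Sum.inr j') : ℝ)) = 2 - (if j' = j then 2 else 0) := by
    intro j j'
    by_cases h : j' = j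
    · subst h; simp
    · rw [d_rr j j' (Ne.symm h)]; simp [h]
  -- transmissions
  have trA : ∀ i : Fin a, transmission G (Sum.inl i) = 2*(a:ℝ) + b - 2 := by
    intro i
    rw [transmission, Fintype.sum_sum_type]
    simp only [dcast_ll, d_lr]
    rw [Finset.sum_sub_distrib]
    simp [Finset.sum_ite_eq']
    ring
  have trB : ∀ j : Fin b, transmission G (Sum.inr j) = (a:ℝ) + 2*b - 2 := by
    intro j
    rw [transmission, Fintype.sum_sum_type]
    simp only [dcast_rr, d_rl]
    rw [Finset.sum_sub_distrib]
    simp [Finset.sum_ite_eq']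
    ring
  set Q := distSLMatrix G with hQdef
  have hQ : Q.IsHermitian := distSLMatrix_isHermitian G
  -- row formulas for mulVec
  have row_l : ∀ (x : Fin a ⊕ Fin b → ℝ) (i : Fin a),
      (Q *ᵥ x) (Sum.inl i) = (2*(a:ℝ)+b-4) * x (Sum.inl i)
        + 2 * (∑ i', x (Sum.inl i')) + (∑ j, x (Sum.inr j)) := by
    intro x i
    rw [hQdef, distSLMatrix, Matrix.add_mulVec, Pi.add_apply, Matrix.mulVec_diagonal, trA]
    rw [show (distMatrix G *ᵥ x) (Sum.inl i) = ∑ u, (G.dist (Sum.inl i) u : ℝ) * x u from rfl]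
    rw [Fintype.sum_sum_type]
    simp only [dcast_ll, d_lr]
    rw [Finset.sum_congr rfl (fun (i' : Fin a) _ => by
      show (2 - (if i' = i then (2:ℝ) else 0)) * x (Sum.inl i')
        = 2 * x (Sum.inl i') - (if i' = i then (2:ℝ) else 0) * x (Sum.inl i'); ring)]
    rw [Finset.sum_sub_distrib]
    simp only [ite_mul, zero_mul, Finset.sum_ite_eq', Finset.mem_univ, if_true, Nat.cast_one,
      one_mul, ← Finset.mul_sum]
    ring
  have row_r : ∀ (x : Fin a ⊕ Fin b → ℝ) (j : Fin b),
      (Q *ᵥ x) (Sum.inr j) = ((a:ℝ)+2*b-4) * x (Sum.inr j)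
        + 2 * (∑ j', x (Sum.inr j')) + (∑ i, x (Sum.inl i)) := by
    intro x j
    rw [hQdef, distSLMatrix, Matrix.add_mulVec, Pi.add_apply, Matrix.mulVec_diagonal, trB]
    rw [show (distMatrix G *ᵥ x) (Sum.inr j) = ∑ u, (G.dist (Sum.inr j) u : ℝ) * x u from rfl]
    rw [Fintype.sum_sum_type]
    simp only [dcast_rr, d_rl]
    rw [Finset.sum_congr rfl (fun (j' : Fin b) _ => by
      show (2 - (if j' = j then (2:ℝ) else 0)) * x (Sum.inr j')
        = 2 * x (Sum.inr j') - (if j' = j then (2:ℝ) else 0) * x (Sum.inr j'); ring)]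
    rw [Finset.sum_sub_distrib]
    simp only [ite_mul, zero_mul, Finset.sum_ite_eq', Finset.mem_univ, if_true, Nat.cast_one,
      one_mul, ← Finset.mul_sum]
    ring
  set c : ℝ := 2*(a:ℝ) + b - 4 with hcdef
  -- quadratic form bound
  have quadform : ∀ x : Fin a ⊕ Fin b → ℝ, c * (x ⬝ᵥ x) ≤ x ⬝ᵥ (Q *ᵥ x) := by
    intro x
    set sA := ∑ i, x (Sum.inl i) with hsA
    set sB := ∑ j, x (Sum.inr j) with hsB
    set PA := ∑ i, (x (Sum.inl i))^2 with hPA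
    set PB := ∑ j, (x (Sum.inr j))^2 with hPB
    have hPB0 : 0 ≤ PB := Finset.sum_nonneg fun j _ => sq_nonneg _
    have hdot : x ⬝ᵥ x = PA + PB := by
      rw [show x ⬝ᵥ x = ∑ u, x u * x u from rfl, Fintype.sum_sum_type, hPA, hPB]
      simp [pow_two]
    have hexp : x ⬝ᵥ (Q *ᵥ x) = c * PA + ((a:ℝ)+2*b-4) * PB
        + 2*sA^2 + 2*sB^2 + 2*sA*sB := by
      rw [show x ⬝ᵥ (Q *ᵥ x) = ∑ u, x u * (Q *ᵥ x) u from rfl, Fintype.sum_sum_type]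
      simp only [row_l x, row_r x]
      rw [Finset.sum_congr rfl (fun (i : Fin a) _ => by
        show x (Sum.inl i) * (c * x (Sum.inl i) + 2 * sA + sB)
          = c * (x (Sum.inl i))^2 + (2*sA + sB) * x (Sum.inl i); ring)]
      rw [Finset.sum_congr rfl (fun (j : Fin b) _ => by
        show x (Sum.inr j) * (((a:ℝ)+2*b-4) * x (Sum.inr j) + 2 * sB + sA)
          = ((a:ℝ)+2*b-4) * (x (Sum.inr j))^2 + (2*sB + sA) * x (Sum.inr j); ring)]
      rw [Finset.sum_add_distrib, Finset.sum_add_distrib, ← Finset.mul_sum, ← Finset.mul_sum,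
        ← Finset.mul_sum, ← Finset.mul_sum, ← hsA, ← hsB, ← hPA, ← hPB]
      ring
    rw [hdot, hexp, hcdef]
    have hba' : (a:ℝ) ≤ b := by exact_mod_cast hba
    nlinarith [sq_nonneg (sA + sB), sq_nonneg sA, sq_nonneg sB]
  -- eigenvector for c
  set w : Fin a ⊕ Fin b → ℝ :=
    Sum.elim (fun i => (if i = (⟨0, ha0⟩ : Fin a) then (1:ℝ) else 0)
      - (if i = (⟨1, by omega⟩ : Fin a) then (1:ℝ) else 0)) (fun _ => 0) with hwdef
  have hwA : (∑ i, w (Sum.inl i)) = 0 := by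
    simp [hwdef, Finset.sum_sub_distrib, Finset.sum_ite_eq']
  have hwB : (∑ j, w (Sum.inr j)) = 0 := by simp [hwdef]
  have hw0 : w ≠ 0 := by
    intro h
    have := congrFun h (Sum.inl (⟨0, ha0⟩ : Fin a))
    simp [hwdef, show (⟨0, ha0⟩ : Fin a) ≠ ⟨1, by omega⟩ from by simp [Fin.ext_iff]] at this
  have hQw : Q *ᵥ w = c • w := by
    funext u
    cases u with
    | inl i => rw [row_l w i, hwA, hwB]; simp only [Pi.smul_apply, smul_eq_mul]; ring
    | inr j => rw [row_r w j, hwA, hwB]; simp [hwdef]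
  haveI : Nonempty (Fin a ⊕ Fin b) := ⟨Sum.inl ⟨0, ha0⟩⟩
  have hge := eig_ge_of_quadform hQ quadform
  obtain ⟨i0, hi0⟩ := exists_eigenvalue_eq hQ hw0 hQw
  have : minEig hQ = c := by
    rw [minEig]
    apply le_antisymm
    · exact hi0 ▸ ciInf_le (Set.Finite.bddBelow (Set.finite_range _)) i0
    · exact le_ciInf hge
  rw [show minEig (distSLMatrix_isHermitian G) = minEig hQ from rfl, this, hcdef]
  have : ((a:ℝ) + b) = n := by exact_mod_cast hab
  linarith
end
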